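/- Let q = f ⊕ V be a Z₂-grading of a Lie algebra q, i.e. [f,f] ⊆ f, [f,V] ⊆ V, and [V,V] ⊆ f. Then for the family of modified brackets [·,·]_(s) defined by φ_s (identity on f, multiplication by s on V), one has [·,·]_(s) = [·,·]_(-s), and for any nonzero s, s' with 2t² = s² + (s')², the brackets satisfy [·,·]_(s) + [·,·]_(s') = 2[·,·]_(t). In particular the brackets [·,·]_(s) are pairwise compatible (every k-linear combination that is a pencil member is again a Lie bracket). -/

import Mathlib

set_option linter.unusedSectionVars false
set_option maxHeartbeats 1000000

namespace PoissonLie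

variable {k : Type*} [Field k] [CharZero k] [IsAlgClosed k]
variable {q : Type*} [LieRing q] [LieAlgebra k q]

/-- The linear map `φ_s : q → q`, identity on `f` and `s · id` on `V`. -/
noncomputable def phiQ (f V : Submodule k q) (h : IsCompl f V) (s : k) : q →ₗ[k] q :=
  (f.subtype ∘ₗ f.linearProjOfIsCompl V h) + s • (V.subtype ∘ₗ V.linearProjOfIsCompl f h.symm)

/-- The modified bracket `[x,y]_(s) = φ_s⁻¹ [φ_s x, φ_s y]`. -/
noncomputable def sBracket (f V : Submodule k q) (h : IsCompl f V) (s : k) (x y : q) : q :=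
  phiQ f V h s⁻¹ ⁅phiQ f V h s x, phiQ f V h s y⁆

/-- The projection onto `f` along `V`. -/
noncomputable def Pf (f V : Submodule k q) (h : IsCompl f V) : q →ₗ[k] q :=
  f.subtype ∘ₗ f.linearProjOfIsCompl V h

/-- The projection onto `V` along `f`. -/
noncomputable def Qv (f V : Submodule k q) (h : IsCompl f V) : q →ₗ[k] q :=
  V.subtype ∘ₗ V.linearProjOfIsCompl f h.symm

lemma phiQ_apply (f V : Submodule k q) (h : IsCompl f V) (s : k) (x : q) :
    phiQ f V h s x = Pf f V h x + s • Qv f V h x := rfl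

lemma Pf_mem (f V : Submodule k q) (h : IsCompl f V) (x : q) : Pf f V h x ∈ f :=
  (f.linearProjOfIsCompl V h x).2

lemma Qv_mem (f V : Submodule k q) (h : IsCompl f V) (x : q) : Qv f V h x ∈ V :=
  (V.linearProjOfIsCompl f h.symm x).2

lemma Pf_of_mem (f V : Submodule k q) (h : IsCompl f V) {x : q} (hx : x ∈ f) :
    Pf f V h x = x := by
  have := Submodule.linearProjOfIsCompl_apply_left h ⟨x, hx⟩
  exact congrArg (f.subtype) this

lemma Pf_of_mem' (f V : Submodule k q) (h : IsCompl f V) {x : q} (hx : x ∈ V) :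
    Pf f V h x = 0 := by
  have := Submodule.linearProjOfIsCompl_apply_right h ⟨x, hx⟩
  exact (congrArg (f.subtype) this).trans (map_zero _)

lemma Qv_of_mem (f V : Submodule k q) (h : IsCompl f V) {x : q} (hx : x ∈ V) :
    Qv f V h x = x := by
  have := Submodule.linearProjOfIsCompl_apply_left h.symm ⟨x, hx⟩
  exact congrArg (V.subtype) this

lemma Qv_of_mem' (f V : Submodule k q) (h : IsCompl f V) {x : q} (hx : x ∈ f) :
    Qv f V h x = 0 := by
  have := Submodule.linearProjOfIsCompl_apply_right h.symm ⟨x, hx⟩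
  exact (congrArg (V.subtype) this).trans (map_zero _)

/-- For a `ℤ₂`-grading, the modified bracket is
`B₀(x,y) + s² B₁(x,y)` where `B₀(x,y) = ⁅Px,Py⁆ + ⁅Px,Qy⁆ + ⁅Qx,Py⁆` and `B₁(x,y) = ⁅Qx,Qy⁆`. -/
lemma sBracket_formula (f : LieSubalgebra k q) (V : Submodule k q)
    (h : IsCompl f.toSubmodule V)
    (hfV : ∀ a ∈ f, ∀ v ∈ V, ⁅a, v⁆ ∈ V)
    (hVV : ∀ v ∈ V, ∀ w ∈ V, ⁅v, w⁆ ∈ f)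
    (s : k) (hs : s ≠ 0) (x y : q) :
    sBracket f.toSubmodule V h s x y =
      ⁅Pf f.toSubmodule V h x, Pf f.toSubmodule V h y⁆
      + ⁅Pf f.toSubmodule V h x, Qv f.toSubmodule V h y⁆
      + ⁅Qv f.toSubmodule V h x, Pf f.toSubmodule V h y⁆
      + s ^ 2 • ⁅Qv f.toSubmodule V h x, Qv f.toSubmodule V h y⁆ := by
  set P := Pf f.toSubmodule V h
  set Q := Qv f.toSubmodule V h
  have hPP : ∀ u v : q, ⁅P u, P v⁆ ∈ f.toSubmodule := fun u v =>
    f.lie_mem (Pf_mem _ _ _ u) (Pf_mem _ _ _ v)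
  have hPQ : ∀ u v : q, ⁅P u, Q v⁆ ∈ V := fun u v =>
    hfV _ (Pf_mem _ _ _ u) _ (Qv_mem _ _ _ v)
  have hQP : ∀ u v : q, ⁅Q u, P v⁆ ∈ V := fun u v => by
    rw [← lie_skew]; exact V.neg_mem (hfV _ (Pf_mem _ _ _ v) _ (Qv_mem _ _ _ u))
  have hQQ : ∀ u v : q, ⁅Q u, Q v⁆ ∈ f.toSubmodule := fun u v =>
    hVV _ (Qv_mem _ _ _ u) _ (Qv_mem _ _ _ v)
  rw [sBracket, phiQ_apply, phiQ_apply, phiQ_apply]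
  simp only [lie_add, add_lie, lie_smul, smul_lie, smul_smul, map_add, map_smul]
  rw [Pf_of_mem _ _ _ (hPP x y), Pf_of_mem' _ _ _ (hPQ x y), Pf_of_mem' _ _ _ (hQP x y),
    Pf_of_mem _ _ _ (hQQ x y), Qv_of_mem' _ _ _ (hPP x y), Qv_of_mem _ _ _ (hPQ x y),
    Qv_of_mem _ _ _ (hQP x y), Qv_of_mem' _ _ _ (hQQ x y)]
  simp only [smul_smul, inv_mul_cancel₀ hs, mul_inv_cancel₀ hs, one_smul, smul_add]
  have hs2 : s⁻¹ * (s * s) = s := by field_simp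
  rw [hs2, sq]
  simp only [smul_zero, add_zero, zero_add]
  abel

/-- A linear combination of the degenerate brackets `B₀` and `B₁`. -/
def comb (P Q : q →ₗ[k] q) (c d : k) (u v : q) : q :=
  c • (⁅P u, P v⁆ + ⁅P u, Q v⁆ + ⁅Q u, P v⁆) + d • ⁅Q u, Q v⁆

/-- Any linear combination `c B₀ + d B₁` satisfies the Jacobi identity. -/
lemma jacobi_comb (P Q : q →ₗ[k] q)
    (hPPP : ∀ u v : q, P ⁅P u, P v⁆ = ⁅P u, P v⁆)
    (hQPP : ∀ u v : q, Q ⁅P u, P v⁆ = 0)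
    (hPPQ : ∀ u v : q, P ⁅P u, Q v⁆ = 0)
    (hQPQ : ∀ u v : q, Q ⁅P u, Q v⁆ = ⁅P u, Q v⁆)
    (hPQP : ∀ u v : q, P ⁅Q u, P v⁆ = 0)
    (hQQP : ∀ u v : q, Q ⁅Q u, P v⁆ = ⁅Q u, P v⁆)
    (hPQQ : ∀ u v : q, P ⁅Q u, Q v⁆ = ⁅Q u, Q v⁆)
    (hQQQ : ∀ u v : q, Q ⁅Q u, Q v⁆ = 0)
    (c d : k) (x y z : q) :
    comb P Q c d x (comb P Q c d y z)
      = comb P Q c d (comb P Q c d x y) z + comb P Q c d y (comb P Q c d x z) := by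
  simp only [comb, map_add, map_smul, lie_add, add_lie, lie_smul, smul_lie,
    hPPP, hQPP, hPPQ, hQPQ, hPQP, hQQP, hPQQ, hQQQ,
    smul_zero, add_zero, zero_add, lie_zero, zero_lie, smul_add, smul_smul, lie_lie]
  module

/-- for a `ℤ₂`-grading `q = f ⊕ V` (i.e. `[f,f] ⊆ f`, `[f,V] ⊆ V`,
`[V,V] ⊆ f`), the modified brackets satisfy `[·,·]_(s) = [·,·]_(-s)`, and
`[·,·]_(s) + [·,·]_(s') = 2·[·,·]_(t)` whenever `2t² = s² + s'²`; in particular the brackets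
are pairwise compatible: every linear combination `a·[·,·]_(s) + b·[·,·]_(s')` satisfies the
Jacobi identity. -/
theorem sBracket_Z2_compatible
    [FiniteDimensional k q]
    (f : LieSubalgebra k q) (V : Submodule k q)
    (h : IsCompl f.toSubmodule V)
    (hfV : ∀ a ∈ f, ∀ v ∈ V, ⁅a, v⁆ ∈ V)
    (hVV : ∀ v ∈ V, ∀ w ∈ V, ⁅v, w⁆ ∈ f) :
    -- `[·,·]_(s) = [·,·]_(-s)`
    (∀ s : k, s ≠ 0 → ∀ x y : q,
        sBracket f.toSubmodule V h s x y = sBracket f.toSubmodule V h (-s) x y) ∧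
    -- the pencil identity `[·,·]_(s) + [·,·]_(s') = 2 [·,·]_(t)` when `2t² = s² + s'²`
    (∀ s s' t : k, s ≠ 0 → s' ≠ 0 → t ≠ 0 → 2 * t ^ 2 = s ^ 2 + s' ^ 2 →
      ∀ x y : q,
        sBracket f.toSubmodule V h s x y + sBracket f.toSubmodule V h s' x y
          = (2 : k) • sBracket f.toSubmodule V h t x y) ∧
    -- pairwise compatibility: every linear combination is again a Lie bracket (Jacobi identity)
    (∀ s s' : k, s ≠ 0 → s' ≠ 0 → ∀ a b : k,
      ∀ x y z : q,
        (let br : q → q → q := fun u v =>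
            a • sBracket f.toSubmodule V h s u v + b • sBracket f.toSubmodule V h s' u v
         br x (br y z) = br (br x y) z + br y (br x z))) := by
  set P := Pf f.toSubmodule V h with hP
  set Q := Qv f.toSubmodule V h with hQ
  refine ⟨?_, ?_, ?_⟩
  · intro s hs x y
    rw [sBracket_formula f V h hfV hVV s hs x y,
      sBracket_formula f V h hfV hVV (-s) (neg_ne_zero.mpr hs) x y, neg_sq]
  · intro s s' t hs hs' ht hst x y
    rw [sBracket_formula f V h hfV hVV s hs x y, sBracket_formula f V h hfV hVV s' hs' x y,
      sBracket_formula f V h hfV hVV t ht x y]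
    match_scalars <;> first
    | ring1
    | linear_combination -hst
  · intro s s' hs hs' a b x y z
    intro br
    have hPPm : ∀ u v : q, ⁅P u, P v⁆ ∈ f.toSubmodule := fun u v =>
      f.lie_mem (Pf_mem _ _ _ u) (Pf_mem _ _ _ v)
    have hPQm : ∀ u v : q, ⁅P u, Q v⁆ ∈ V := fun u v =>
      hfV _ (Pf_mem _ _ _ u) _ (Qv_mem _ _ _ v)
    have hQPm : ∀ u v : q, ⁅Q u, P v⁆ ∈ V := fun u v => by
      rw [← lie_skew]; exact V.neg_mem (hfV _ (Pf_mem _ _ _ v) _ (Qv_mem _ _ _ u))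
    have hQQm : ∀ u v : q, ⁅Q u, Q v⁆ ∈ f.toSubmodule := fun u v =>
      hVV _ (Qv_mem _ _ _ u) _ (Qv_mem _ _ _ v)
    have hbr : ∀ u v : q, br u v = comb P Q (a + b) (a * s ^ 2 + b * s' ^ 2) u v := by
      intro u v
      simp only [br]
      rw [sBracket_formula f V h hfV hVV s hs u v, sBracket_formula f V h hfV hVV s' hs' u v]
      simp only [comb]
      module
    simp only [hbr]
    exact jacobi_comb P Q
      (fun u v => Pf_of_mem _ _ _ (hPPm u v)) (fun u v => Qv_of_mem' _ _ _ (hPPm u v))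
      (fun u v => Pf_of_mem' _ _ _ (hPQm u v)) (fun u v => Qv_of_mem _ _ _ (hPQm u v))
      (fun u v => Pf_of_mem' _ _ _ (hQPm u v)) (fun u v => Qv_of_mem _ _ _ (hQPm u v))
      (fun u v => Pf_of_mem _ _ _ (hQQm u v)) (fun u v => Qv_of_mem' _ _ _ (hQQm u v))
      (a + b) (a * s ^ 2 + b * s' ^ 2) x y z

end PoissonLie
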